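/- arXiv:1512.01813 — 3 statements merged into one kernel-verified Lean document; each statement's English description precedes it below -/
import Mathlib

section
/- (POD basis theorem.) Let V be a real Hilbert space, let y_0, …, y_n ∈ V be given snapshots and β_0, …, β_n > 0 given positive weights, let 𝒱 := span{y_0, …, y_n} with d := dim 𝒱, and let R : V → V be defined by Rψ = Σ_{j=0}^n β_j ⟨y_j, ψ⟩ y_j, with positive eigenvalues λ_1 ≥ … ≥ λ_d > 0 counted with multiplicity and corresponding orthonormal eigenvectors ψ_1, …, ψ_d spanning 𝒱. Then for every ℓ ∈ {1, …, d}, the family ψ_1, …, ψ_ℓ solves the POD minimization problem: for every orthonormal family φ_1, …, φ_ℓ in V one has Σ_{j=0}^n β_j ‖y_j − Σ_{i=1}^ℓ ⟨y_j, ψ_i⟩ ψ_i‖² ≤ Σ_{j=0}^n β_j ‖y_j − Σ_{i=1}^ℓ ⟨y_j, φ_i⟩ φ_i‖². -/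
open RealInnerProductSpace

/-- POD basis theorem: the leading eigenvectors `ψ_1, …, ψ_ℓ` of the correlation
operator solve the POD minimization problem among all orthonormal families of
size `ℓ`. -/
theorem pod_basis_theorem
    {V : Type*} [NormedAddCommGroup V] [InnerProductSpace ℝ V] [CompleteSpace V]
    (n : ℕ) (y : Fin (n + 1) → V) (β : Fin (n + 1) → ℝ) (hβ : ∀ j, 0 < β j)
    (R : V → V) (hR : ∀ ψ : V, R ψ = ∑ j, (β j * ⟪y j, ψ⟫) • y j)
    (d : ℕ) (hd : d = Module.finrank ℝ (Submodule.span ℝ (Set.range y)))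
    (lam : Fin d → ℝ) (ψ : Fin d → V)
    (hord : ∀ i j : Fin d, i ≤ j → lam j ≤ lam i)
    (hpos : ∀ i : Fin d, 0 < lam i)
    (hon : Orthonormal ℝ ψ)
    (heig : ∀ i : Fin d, R (ψ i) = lam i • ψ i)
    (hspan : Submodule.span ℝ (Set.range ψ) = Submodule.span ℝ (Set.range y))
    (ℓ : ℕ) (hℓ1 : 1 ≤ ℓ) (hℓd : ℓ ≤ d) :
    ∀ φ : Fin ℓ → V, Orthonormal ℝ φ →
      ∑ j, β j * ‖y j - ∑ i : Fin ℓ, ⟪y j, ψ (Fin.castLE hℓd i)⟫ • ψ (Fin.castLE hℓd i)‖ ^ 2 ≤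
      ∑ j, β j * ‖y j - ∑ i : Fin ℓ, ⟪y j, φ i⟫ • φ i‖ ^ 2 := by
  intro φ hφ
  classical
  -- Expansion of the snapshots in the orthonormal eigenvector system
  have hy : ∀ j, y j = ∑ k : Fin d, ⟪ψ k, y j⟫ • ψ k := by
    intro j
    have hmem : y j ∈ Submodule.span ℝ (Set.range ψ) := by
      rw [hspan]; exact Submodule.subset_span ⟨j, rfl⟩
    rw [Submodule.mem_span_range_iff_exists_fun] at hmem
    obtain ⟨c, hc⟩ := hmem
    have hck : ∀ k, ⟪ψ k, y j⟫ = c k := fun k => by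
      rw [← hc, hon.inner_right_fintype]
    simp_rw [hck]
    exact hc.symm
  -- The key identity for the correlation operator against eigenvectors
  have hRinner : ∀ (k : Fin d) (v : V),
      ∑ j, β j * ⟪y j, ψ k⟫ * ⟪y j, v⟫ = lam k * ⟪ψ k, v⟫ := by
    intro k v
    have h1 : ⟪R (ψ k), v⟫ = ∑ j, β j * ⟪y j, ψ k⟫ * ⟪y j, v⟫ := by
      rw [hR, sum_inner]
      exact Finset.sum_congr rfl fun j _ => real_inner_smul_left _ _ _
    have h2 : ⟪R (ψ k), v⟫ = lam k * ⟪ψ k, v⟫ := by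
      rw [heig, real_inner_smul_left]
    rw [← h1, h2]
  -- The objective value of any orthonormal family
  have hobj : ∀ (v : Fin ℓ → V), Orthonormal ℝ v →
      ∑ j, β j * ‖y j - ∑ i : Fin ℓ, ⟪y j, v i⟫ • v i‖ ^ 2
        = (∑ j, β j * ‖y j‖ ^ 2) - ∑ i : Fin ℓ, ∑ j, β j * ⟪y j, v i⟫ ^ 2 := by
    intro v hv
    have hnorm : ∀ u : V,
        ‖u - ∑ i : Fin ℓ, ⟪u, v i⟫ • v i‖ ^ 2 = ‖u‖ ^ 2 - ∑ i : Fin ℓ, ⟪u, v i⟫ ^ 2 := by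
      intro u
      have h1 : ⟪u, ∑ i : Fin ℓ, ⟪u, v i⟫ • v i⟫ = ∑ i : Fin ℓ, ⟪u, v i⟫ ^ 2 := by
        rw [inner_sum]
        refine Finset.sum_congr rfl fun i _ => ?_
        rw [real_inner_smul_right, sq]
      have h2 : ‖∑ i : Fin ℓ, ⟪u, v i⟫ • v i‖ ^ 2 = ∑ i : Fin ℓ, ⟪u, v i⟫ ^ 2 := by
        rw [← real_inner_self_eq_norm_sq,
          hv.inner_sum (fun i => ⟪u, v i⟫) (fun i => ⟪u, v i⟫) Finset.univ]
        refine Finset.sum_congr rfl fun i _ => ?_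
        simp [sq]
      rw [norm_sub_sq_real, h1, h2]
      ring
    calc ∑ j, β j * ‖y j - ∑ i : Fin ℓ, ⟪y j, v i⟫ • v i‖ ^ 2
        = ∑ j, (β j * ‖y j‖ ^ 2 - ∑ i : Fin ℓ, β j * ⟪y j, v i⟫ ^ 2) := by
          refine Finset.sum_congr rfl fun j _ => ?_
          rw [hnorm (y j), mul_sub, Finset.mul_sum]
      _ = (∑ j, β j * ‖y j‖ ^ 2) - ∑ j, ∑ i : Fin ℓ, β j * ⟪y j, v i⟫ ^ 2 := by
          rw [Finset.sum_sub_distrib]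
      _ = (∑ j, β j * ‖y j‖ ^ 2) - ∑ i : Fin ℓ, ∑ j, β j * ⟪y j, v i⟫ ^ 2 := by
          rw [Finset.sum_comm]
  -- the weighted sums of squared inner products expand in the eigenbasis
  have hexp : ∀ w : V, ∑ k : Fin d, lam k * ⟪ψ k, w⟫ ^ 2 = ∑ j, β j * ⟪y j, w⟫ ^ 2 := by
    intro w
    have h1 : ∀ j, ⟪y j, w⟫ = ∑ k : Fin d, ⟪ψ k, y j⟫ * ⟪ψ k, w⟫ := by
      intro j
      conv_lhs => rw [hy j]
      rw [sum_inner]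
      exact Finset.sum_congr rfl fun k _ => real_inner_smul_left _ _ _
    calc ∑ k : Fin d, lam k * ⟪ψ k, w⟫ ^ 2
        = ∑ k : Fin d, ∑ j, ⟪ψ k, w⟫ * (β j * ⟪y j, ψ k⟫ * ⟪y j, w⟫) := by
          refine Finset.sum_congr rfl fun k _ => ?_
          rw [← Finset.mul_sum, hRinner k w]; ring
      _ = ∑ j, (β j * ⟪y j, w⟫) * ∑ k : Fin d, ⟪ψ k, y j⟫ * ⟪ψ k, w⟫ := by
          rw [Finset.sum_comm]
          refine Finset.sum_congr rfl fun j _ => ?_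
          rw [Finset.mul_sum]
          refine Finset.sum_congr rfl fun k _ => ?_
          rw [real_inner_comm (y j) (ψ k)]
          ring
      _ = ∑ j, β j * ⟪y j, w⟫ ^ 2 := by
          refine Finset.sum_congr rfl fun j _ => ?_
          rw [← h1 j]; ring
  -- the eigenvalues as weighted sums
  have hA : ∀ k : Fin d, ∑ j, β j * ⟪y j, ψ k⟫ ^ 2 = lam k := by
    intro k
    have h := hRinner k (ψ k)
    rw [real_inner_self_eq_norm_sq, hon.1 k] at h
    calc ∑ j, β j * ⟪y j, ψ k⟫ ^ 2 = ∑ j, β j * ⟪y j, ψ k⟫ * ⟪y j, ψ k⟫ := by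
          refine Finset.sum_congr rfl fun j _ => by ring
      _ = lam k * 1 ^ 2 := h
      _ = lam k := by norm_num
  -- Bessel inequalities
  have ht0 : ∀ k : Fin d, 0 ≤ ∑ i : Fin ℓ, ⟪ψ k, φ i⟫ ^ 2 :=
    fun k => Finset.sum_nonneg fun i _ => sq_nonneg _
  have ht1 : ∀ k : Fin d, (∑ i : Fin ℓ, ⟪ψ k, φ i⟫ ^ 2) ≤ 1 := by
    intro k
    have h := hφ.sum_inner_products_le (𝕜 := ℝ) (ψ k) (s := Finset.univ)
    simp only [Real.norm_eq_abs, sq_abs] at h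
    calc ∑ i : Fin ℓ, ⟪ψ k, φ i⟫ ^ 2 = ∑ i : Fin ℓ, ⟪φ i, ψ k⟫ ^ 2 := by
          refine Finset.sum_congr rfl fun i _ => by rw [real_inner_comm]
      _ ≤ ‖ψ k‖ ^ 2 := h
      _ = 1 := by rw [hon.1 k]; norm_num
  have htsum : ∑ k : Fin d, ∑ i : Fin ℓ, ⟪ψ k, φ i⟫ ^ 2 ≤ (ℓ : ℝ) := by
    rw [Finset.sum_comm]
    calc ∑ i : Fin ℓ, ∑ k : Fin d, ⟪ψ k, φ i⟫ ^ 2 ≤ ∑ _i : Fin ℓ, (1 : ℝ) := by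
          refine Finset.sum_le_sum fun i _ => ?_
          have h := hon.sum_inner_products_le (𝕜 := ℝ) (φ i) (s := Finset.univ)
          simp only [Real.norm_eq_abs, sq_abs] at h
          calc ∑ k : Fin d, ⟪ψ k, φ i⟫ ^ 2 ≤ ‖φ i‖ ^ 2 := h
            _ = 1 := by rw [hφ.1 i]; norm_num
      _ = (ℓ : ℝ) := by simp
  -- main rearrangement inequality
  have key : ∑ k : Fin d, lam k * ∑ i : Fin ℓ, ⟪ψ k, φ i⟫ ^ 2
      ≤ ∑ i : Fin ℓ, lam (Fin.castLE hℓd i) := by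
    have hmlt : ℓ - 1 < d := by omega
    set m : Fin d := ⟨ℓ - 1, hmlt⟩ with hm
    have hstep : ∀ k : Fin d, lam k * ∑ i : Fin ℓ, ⟪ψ k, φ i⟫ ^ 2
        ≤ (if (k : ℕ) < ℓ then lam k - lam m else 0) + lam m * ∑ i : Fin ℓ, ⟪ψ k, φ i⟫ ^ 2 := by
      intro k
      by_cases h : (k : ℕ) < ℓ
      · simp only [h, if_true]
        have h1 : lam m ≤ lam k := hord k m (by simp only [Fin.le_def, hm]; omega)
        nlinarith [ht1 k, ht0 k]
      · simp only [h, if_false]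
        have h1 : lam k ≤ lam m := hord m k (by simp only [Fin.le_def, hm]; omega)
        nlinarith [ht0 k]
    have hif : (∑ k : Fin d, if (k : ℕ) < ℓ then lam k - lam m else 0)
        = ∑ i : Fin ℓ, (lam (Fin.castLE hℓd i) - lam m) := by
      rw [← Finset.sum_filter]
      have hset : Finset.univ.filter (fun k : Fin d => (k : ℕ) < ℓ)
          = Finset.univ.map (Fin.castLEEmb hℓd) := by
        ext k
        simp only [Finset.mem_filter, Finset.mem_univ, true_and, Finset.mem_map,
          Fin.castLEEmb_apply]
        constructor
        · intro hk
          exact ⟨⟨(k : ℕ), hk⟩, by ext; simp⟩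
        · rintro ⟨i, -, rfl⟩
          simp [Fin.castLE, i.2]
      rw [hset, Finset.sum_map]
      rfl
    calc ∑ k : Fin d, lam k * ∑ i : Fin ℓ, ⟪ψ k, φ i⟫ ^ 2
        ≤ ∑ k : Fin d, ((if (k : ℕ) < ℓ then lam k - lam m else 0)
            + lam m * ∑ i : Fin ℓ, ⟪ψ k, φ i⟫ ^ 2) :=
          Finset.sum_le_sum fun k _ => hstep k
      _ = (∑ k : Fin d, if (k : ℕ) < ℓ then lam k - lam m else 0)
            + lam m * ∑ k : Fin d, ∑ i : Fin ℓ, ⟪ψ k, φ i⟫ ^ 2 := by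
          rw [Finset.sum_add_distrib, Finset.mul_sum]
      _ ≤ (∑ i : Fin ℓ, (lam (Fin.castLE hℓd i) - lam m)) + lam m * (ℓ : ℝ) := by
          rw [hif]
          have := mul_le_mul_of_nonneg_left htsum (le_of_lt (hpos m))
          linarith
      _ = ∑ i : Fin ℓ, lam (Fin.castLE hℓd i) := by
          rw [Finset.sum_sub_distrib, Finset.sum_const, Finset.card_univ, Fintype.card_fin,
            nsmul_eq_mul]
          ring
  -- assemble
  have honc : Orthonormal ℝ (fun i : Fin ℓ => ψ (Fin.castLE hℓd i)) :=
    hon.comp _ (Fin.castLE_injective hℓd)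
  rw [hobj φ hφ, hobj (fun i : Fin ℓ => ψ (Fin.castLE hℓd i)) honc]
  have hB : ∑ i : Fin ℓ, ∑ j, β j * ⟪y j, φ i⟫ ^ 2
      ≤ ∑ i : Fin ℓ, ∑ j, β j * ⟪y j, ψ (Fin.castLE hℓd i)⟫ ^ 2 := by
    have hL : ∑ i : Fin ℓ, ∑ j, β j * ⟪y j, φ i⟫ ^ 2
        = ∑ k : Fin d, lam k * ∑ i : Fin ℓ, ⟪ψ k, φ i⟫ ^ 2 := by
      calc ∑ i : Fin ℓ, ∑ j, β j * ⟪y j, φ i⟫ ^ 2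
          = ∑ i : Fin ℓ, ∑ k : Fin d, lam k * ⟪ψ k, φ i⟫ ^ 2 :=
            Finset.sum_congr rfl fun i _ => (hexp (φ i)).symm
        _ = ∑ k : Fin d, ∑ i : Fin ℓ, lam k * ⟪ψ k, φ i⟫ ^ 2 := Finset.sum_comm
        _ = ∑ k : Fin d, lam k * ∑ i : Fin ℓ, ⟪ψ k, φ i⟫ ^ 2 :=
            Finset.sum_congr rfl fun k _ => (Finset.mul_sum _ _ _).symm
    have hRt : ∑ i : Fin ℓ, ∑ j, β j * ⟪y j, ψ (Fin.castLE hℓd i)⟫ ^ 2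
        = ∑ i : Fin ℓ, lam (Fin.castLE hℓd i) :=
      Finset.sum_congr rfl fun i _ => hA _
    rw [hL, hRt]
    exact key
  linarith
end

section
/- (POD approximation error formula.) Let V be a real Hilbert space, let y_0, …, y_n ∈ V be given snapshots and β_0, …, β_n > 0 given positive weights, let 𝒱 := span{y_0, …, y_n} with d := dim 𝒱, and let R : V → V be defined by Rψ = Σ_{j=0}^n β_j ⟨y_j, ψ⟩ y_j, with positive eigenvalues λ_1 ≥ … ≥ λ_d > 0 counted with multiplicity and corresponding orthonormal eigenvectors ψ_1, …, ψ_d spanning 𝒱. Then for every ℓ ∈ {1, …, d} the POD approximation error is given exactly by the sum of the neglected eigenvalues: Σ_{j=0}^n β_j ‖y_j − Σ_{i=1}^ℓ ⟨y_j, ψ_i⟩ ψ_i‖² = Σ_{i=ℓ+1}^d λ_i. -/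
open RealInnerProductSpace

lemma pod_aux_norm_sum {V : Type*} [NormedAddCommGroup V] [InnerProductSpace ℝ V]
    {ι : Type*} {ψ : ι → V} (hon : Orthonormal ℝ ψ) (s : Finset ι) (l : ι → ℝ) :
    ‖∑ i ∈ s, l i • ψ i‖ ^ 2 = ∑ i ∈ s, (l i) ^ 2 := by
  classical
  rw [← real_inner_self_eq_norm_sq, inner_sum]
  refine Finset.sum_congr rfl fun i hi => ?_
  rw [real_inner_smul_right, hon.inner_left_sum l hi]
  simp [sq]

lemma pod_aux_map_eq_filter {ℓ d : ℕ} (hℓd : ℓ ≤ d) :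
    (Finset.univ : Finset (Fin ℓ)).map (Fin.castLEEmb hℓd)
      = Finset.univ.filter (fun i : Fin d => (i : ℕ) < ℓ) := by
  ext i
  simp only [Finset.mem_map, Finset.mem_univ, true_and, Finset.mem_filter,
    Fin.castLEEmb, Function.Embedding.coeFn_mk]
  constructor
  · rintro ⟨a, rfl⟩; exact a.2
  · rintro h; exact ⟨⟨(i : ℕ), h⟩, by ext; rfl⟩

/-- POD approximation error formula: the projection error onto the span of the
leading `ℓ` eigenvectors equals the sum of the neglected eigenvalues
`∑_{i=ℓ+1}^d λ_i`. -/
theorem pod_approximation_error_formula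
    {V : Type*} [NormedAddCommGroup V] [InnerProductSpace ℝ V] [CompleteSpace V]
    (n : ℕ) (y : Fin (n + 1) → V) (β : Fin (n + 1) → ℝ) (hβ : ∀ j, 0 < β j)
    (R : V → V) (hR : ∀ ψ : V, R ψ = ∑ j, (β j * ⟪y j, ψ⟫) • y j)
    (d : ℕ) (hd : d = Module.finrank ℝ (Submodule.span ℝ (Set.range y)))
    (lam : Fin d → ℝ) (ψ : Fin d → V)
    (hord : ∀ i j : Fin d, i ≤ j → lam j ≤ lam i)
    (hpos : ∀ i : Fin d, 0 < lam i)
    (hon : Orthonormal ℝ ψ)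
    (heig : ∀ i : Fin d, R (ψ i) = lam i • ψ i)
    (hspan : Submodule.span ℝ (Set.range ψ) = Submodule.span ℝ (Set.range y))
    (ℓ : ℕ) (hℓ1 : 1 ≤ ℓ) (hℓd : ℓ ≤ d) :
    ∑ j, β j * ‖y j - ∑ i : Fin ℓ, ⟪y j, ψ (Fin.castLE hℓd i)⟫ • ψ (Fin.castLE hℓd i)‖ ^ 2 =
      ∑ i ∈ Finset.univ.filter (fun i : Fin d => ℓ ≤ (i : ℕ)), lam i := by
  classical
  set c : Fin (n + 1) → Fin d → ℝ := fun j i => ⟪y j, ψ i⟫ with hcdef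
  -- each snapshot lies in the span of the eigenvectors
  have hyj : ∀ j, y j = ∑ i : Fin d, c j i • ψ i := by
    intro j
    have hmem : y j ∈ Submodule.span ℝ (Set.range ψ) := by
      rw [hspan]; exact Submodule.subset_span ⟨j, rfl⟩
    obtain ⟨a, ha⟩ := (Submodule.mem_span_range_iff_exists_fun ℝ).mp hmem
    have hca : ∀ i, c j i = a i := by
      intro i
      have h1 : ⟪ψ i, y j⟫ = a i := by
        rw [← ha]; exact hon.inner_right_fintype a i
      simpa [hcdef, real_inner_comm] using h1
    rw [← ha]
    exact Finset.sum_congr rfl fun i _ => by rw [hca i]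
  -- the residual is the tail of the expansion
  have hres : ∀ j, y j - ∑ i : Fin ℓ, ⟪y j, ψ (Fin.castLE hℓd i)⟫ • ψ (Fin.castLE hℓd i)
      = ∑ i ∈ Finset.univ.filter (fun i : Fin d => ℓ ≤ (i : ℕ)), c j i • ψ i := by
    intro j
    have h1 : ∑ i : Fin ℓ, ⟪y j, ψ (Fin.castLE hℓd i)⟫ • ψ (Fin.castLE hℓd i)
        = ∑ i ∈ Finset.univ.filter (fun i : Fin d => (i : ℕ) < ℓ), c j i • ψ i := by
      rw [← pod_aux_map_eq_filter hℓd, Finset.sum_map]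
      rfl
    have h2 : (∑ i ∈ Finset.univ.filter (fun i : Fin d => (i : ℕ) < ℓ), c j i • ψ i)
        + ∑ i ∈ Finset.univ.filter (fun i : Fin d => ¬ (i : ℕ) < ℓ), c j i • ψ i
        = ∑ i : Fin d, c j i • ψ i :=
      Finset.sum_filter_add_sum_filter_not _ _ _
    have h3 : (Finset.univ.filter (fun i : Fin d => ¬ (i : ℕ) < ℓ))
        = Finset.univ.filter (fun i : Fin d => ℓ ≤ (i : ℕ)) := by
      simp [not_lt]
    rw [h1]
    nth_rewrite 1 [hyj j]
    rw [← h2, h3]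
    abel
  -- eigenvalue identity
  have hlam : ∀ i : Fin d, lam i = ∑ j, β j * (c j i) ^ 2 := by
    intro i
    have h1 : ⟪ψ i, R (ψ i)⟫ = lam i := by
      rw [heig i, real_inner_smul_right, real_inner_self_eq_norm_sq, hon.1 i]
      ring
    have h2 : ⟪ψ i, R (ψ i)⟫ = ∑ j, β j * (c j i) ^ 2 := by
      rw [hR, inner_sum]
      refine Finset.sum_congr rfl fun j _ => ?_
      rw [real_inner_smul_right]
      simp only [hcdef]
      rw [real_inner_comm (ψ i) (y j)]
      ring
    rw [← h1, h2]
  calc ∑ j, β j * ‖y j - ∑ i : Fin ℓ, ⟪y j, ψ (Fin.castLE hℓd i)⟫ • ψ (Fin.castLE hℓd i)‖ ^ 2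
      = ∑ j, ∑ i ∈ Finset.univ.filter (fun i : Fin d => ℓ ≤ (i : ℕ)), β j * (c j i) ^ 2 := by
        refine Finset.sum_congr rfl fun j _ => ?_
        rw [hres j, pod_aux_norm_sum hon, Finset.mul_sum]
    _ = ∑ i ∈ Finset.univ.filter (fun i : Fin d => ℓ ≤ (i : ℕ)), ∑ j, β j * (c j i) ^ 2 :=
        Finset.sum_comm
    _ = ∑ i ∈ Finset.univ.filter (fun i : Fin d => ℓ ≤ (i : ℕ)), lam i :=
        Finset.sum_congr rfl fun i _ => (hlam i).symm
end

section
/- Let V be a real Hilbert space, let y_0, …, y_n ∈ V be given snapshots and β_0, …, β_n > 0 given positive weights, and let R : V → V be defined by Rψ = Σ_{j=0}^n β_j ⟨y_j, ψ⟩ y_j. Let K ∈ ℝ^{(n+1)×(n+1)} be the weighted Gram matrix with entries K_{jk} = √(β_j) √(β_k) ⟨y_j, y_k⟩. Then λ > 0 is an eigenvalue of R if and only if λ is an eigenvalue of the symmetric matrix K; i.e. the positive eigenvalues of the correlation operator R coincide with the positive eigenvalues of the weighted snapshot Gram matrix. -/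
open RealInnerProductSpace

/-- Method of snapshots: a positive real `λ` is an eigenvalue of the POD correlation
operator `R ψ = ∑ β_j ⟪y_j, ψ⟫ y_j` if and only if it is an eigenvalue of the
weighted snapshot Gram matrix `K` with `K_{jk} = √β_j √β_k ⟪y_j, y_k⟫`. -/
theorem pod_eigenvalues_eq_gram_eigenvalues
    {V : Type*} [NormedAddCommGroup V] [InnerProductSpace ℝ V] [CompleteSpace V]
    (n : ℕ) (y : Fin (n + 1) → V) (β : Fin (n + 1) → ℝ) (hβ : ∀ j, 0 < β j)
    (R : V → V) (hR : ∀ ψ : V, R ψ = ∑ j, (β j * ⟪y j, ψ⟫) • y j)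
    (K : Matrix (Fin (n + 1)) (Fin (n + 1)) ℝ)
    (hK : ∀ j k, K j k = Real.sqrt (β j) * Real.sqrt (β k) * ⟪y j, y k⟫)
    (lam : ℝ) (hlam : 0 < lam) :
    (∃ ψ : V, ψ ≠ 0 ∧ R ψ = lam • ψ) ↔
      (∃ v : Fin (n + 1) → ℝ, v ≠ 0 ∧ K.mulVec v = lam • v) := by
  have hs : ∀ j, (0:ℝ) < Real.sqrt (β j) := fun j => Real.sqrt_pos.mpr (hβ j)
  have hss : ∀ j, Real.sqrt (β j) * Real.sqrt (β j) = β j :=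
    fun j => Real.mul_self_sqrt (hβ j).le
  constructor
  · rintro ⟨ψ, hψ, hR'⟩
    refine ⟨fun j => Real.sqrt (β j) * ⟪y j, ψ⟫, ?_, ?_⟩
    · intro h
      apply hψ
      have hz : ∀ j, ⟪y j, ψ⟫ = 0 := by
        intro j
        have h1 := congrFun h j
        simp only [Pi.zero_apply, mul_eq_zero] at h1
        rcases h1 with h1 | h1
        · exact absurd h1 (hs j).ne'
        · exact h1
      have h0 : R ψ = 0 := by rw [hR]; simp [hz]
      rw [hR'] at h0
      rcases smul_eq_zero.mp h0 with h0 | h0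
      · exact absurd h0 hlam.ne'
      · exact h0
    · funext j
      have key : ⟪y j, R ψ⟫ = lam * ⟪y j, ψ⟫ := by
        rw [hR', real_inner_smul_right]
      rw [hR ψ, inner_sum] at key
      simp only [real_inner_smul_right] at key
      simp only [Matrix.mulVec, dotProduct, hK, Pi.smul_apply, smul_eq_mul]
      calc ∑ k, Real.sqrt (β j) * Real.sqrt (β k) * ⟪y j, y k⟫ *
              (Real.sqrt (β k) * ⟪y k, ψ⟫)
          = Real.sqrt (β j) * ∑ k, β k * ⟪y k, ψ⟫ * ⟪y j, y k⟫ := by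
            rw [Finset.mul_sum]
            refine Finset.sum_congr rfl fun k _ => ?_
            linear_combination (Real.sqrt (β j) * ⟪y j, y k⟫ * ⟪y k, ψ⟫) * hss k
        _ = lam * (Real.sqrt (β j) * ⟪y j, ψ⟫) := by rw [key]; ring
  · rintro ⟨v, hv, hKv⟩
    set ψ : V := ∑ k, (Real.sqrt (β k) * v k) • y k with hψdef
    have hinner : ∀ j, Real.sqrt (β j) * ⟪y j, ψ⟫ = lam * v j := by
      intro j
      have h1 := congrFun hKv j
      simp only [Matrix.mulVec, dotProduct, hK, Pi.smul_apply, smul_eq_mul] at h1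
      rw [hψdef, inner_sum]
      simp only [real_inner_smul_right]
      rw [Finset.mul_sum, ← h1]
      exact Finset.sum_congr rfl fun k _ => by ring
    refine ⟨ψ, ?_, ?_⟩
    · intro h
      apply hv
      funext j
      have := hinner j
      rw [h, inner_zero_right, mul_zero] at this
      have := this.symm
      rcases mul_eq_zero.mp this with h1 | h1
      · exact absurd h1 hlam.ne'
      · simpa using h1
    · rw [hR, hψdef, Finset.smul_sum]
      refine Finset.sum_congr rfl fun j _ => ?_
      rw [smul_smul]
      congr 1
      linear_combination Real.sqrt (β j) * hinner j - ⟪y j, ψ⟫ * hss j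
end
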